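/- Let G be a finite simple split graph with vertex partition into a maximal clique Q and a stable set S, with Q totally ordered v_1 < v_2 < ... < v_r and partitioned into consecutive segments Q_l = {v_1,...,v_p}, Q_r = {v_q,...,v_r}, Q_t = Q \ (Q_l ∪ Q_r), such that every s ∈ S has neighborhood of one of the forms (i) {v_1,...,v_i} with i ≤ p, (ii) {v_j,...,v_r} with q ≤ j ≤ r, or (iii) {v_1,...,v_i} ∪ {v_j,...,v_r} with i ≤ p and q ≤ j ≤ r; let S_l, S_r, S_t be the sets of vertices of S of forms (i), (ii), (iii) respectively, and assume p = |N(S_l)| and |N(S_r)| = r - q + 1. If both Q_l and Q_r contain a vertex of degree Δ(G), then Δ(G) = |Q| - 1 + |S_l| + |S_t| = |Q| - 1 + |S_r| + |S_t|, and consequently |S_l| = |S_r|. -/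

import Mathlib

/-! Basic definitions for edge coloring and split/comparability graphs. -/

variable {V : Type*}

/-- The degree of a vertex. -/
noncomputable def deg (G : SimpleGraph V) (x : V) : ℕ := (G.neighborSet x).ncard

/-- The maximum degree Δ(G). -/
noncomputable def maxDeg (G : SimpleGraph V) : ℕ := sSup (Set.range (deg G))

/-- A proper edge coloring: distinct edges sharing an endpoint get distinct colors. -/
def IsProperEdgeColoring (G : SimpleGraph V) (c : Sym2 V → ℕ) : Prop :=
  ∀ e ∈ G.edgeSet, ∀ f ∈ G.edgeSet, e ≠ f → (∃ x, x ∈ e ∧ x ∈ f) → c e ≠ c f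

/-- `G` has a proper edge coloring with `k` colors. -/
def HasProperEdgeColoring (G : SimpleGraph V) (k : ℕ) : Prop :=
  ∃ c : Sym2 V → ℕ, (∀ e ∈ G.edgeSet, c e < k) ∧ IsProperEdgeColoring G c

/-- The chromatic index χ'(G). -/
noncomputable def chromIndex (G : SimpleGraph V) : ℕ :=
  sInf {k | HasProperEdgeColoring G k}

/-- An edge coloring with colors `< k` is balanced if any two color classes
differ in cardinality by at most 1. -/
def BalancedEdgeColoring (G : SimpleGraph V) (c : Sym2 V → ℕ) (k : ℕ) : Prop :=
  ∀ i < k, ∀ j < k,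
    {e | e ∈ G.edgeSet ∧ c e = i}.ncard ≤ {e | e ∈ G.edgeSet ∧ c e = j}.ncard + 1

/-- A graph is overfull if it has an odd number `n` of vertices and
`m > (n - 1) * Δ / 2` edges. -/
def Overfull (G : SimpleGraph V) : Prop :=
  Odd (Nat.card V) ∧ (Nat.card V - 1) * maxDeg G < 2 * G.edgeSet.ncard

/-- A graph is neighborhood-overfull if the subgraph induced by the closed
neighborhood of some maximum-degree vertex is overfull. -/
def NeighborhoodOverfull (G : SimpleGraph V) : Prop :=
  ∃ x : V, deg G x = maxDeg G ∧ Overfull (G.induce (G.neighborSet x ∪ {x}))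

/-- A graph is subgraph-overfull if it has a subgraph of the same maximum degree
that is overfull. -/
def SubgraphOverfull (G : SimpleGraph V) : Prop :=
  ∃ H : G.Subgraph, maxDeg H.coe = maxDeg G ∧ Overfull H.coe

/-- A graph is saturated if it has an odd number of vertices and its complement
has exactly Δ(G)/2 edges. -/
def Saturated (G : SimpleGraph V) : Prop :=
  Odd (Nat.card V) ∧ 2 * (Gᶜ.edgeSet.ncard) = maxDeg G

/-- `Q`, `S` form a split partition of `G`: a partition of the vertices into a
clique `Q` and a stable set `S`. -/
def IsSplitPartition (G : SimpleGraph V) (Q S : Set V) : Prop :=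
  Q ∪ S = Set.univ ∧ Disjoint Q S ∧ G.IsClique Q ∧ ∀ a ∈ S, ∀ b ∈ S, ¬ G.Adj a b

/-- A split graph. -/
def IsSplit (G : SimpleGraph V) : Prop := ∃ Q S : Set V, IsSplitPartition G Q S

/-- A comparability graph: one admitting a transitive orientation of its edges,
i.e. the comparability graph of a strict partial order. -/
def IsComparability (G : SimpleGraph V) : Prop :=
  ∃ r : V → V → Prop, (∀ a, ¬ r a a) ∧ (∀ a b c, r a b → r b c → r a c) ∧
    (∀ a b, G.Adj a b ↔ (r a b ∨ r b a))

/-- Form (i): `N(s) = {v_1, …, v_i}` for some `1 ≤ i ≤ p`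
(vertices `v_1, …, v_r` being `v 0, …, v (r-1)`). -/
def FormL {r : ℕ} (G : SimpleGraph V) (v : Fin r → V) (p : ℕ) (s : V) : Prop :=
  ∃ i, 1 ≤ i ∧ i ≤ p ∧ G.neighborSet s = v '' {j : Fin r | (j : ℕ) < i}

/-- Form (ii): `N(s) = {v_j, …, v_r}` for some `q ≤ j ≤ r`. -/
def FormR {r : ℕ} (G : SimpleGraph V) (v : Fin r → V) (q : ℕ) (s : V) : Prop :=
  ∃ j, q ≤ j ∧ j ≤ r ∧ G.neighborSet s = v '' {k : Fin r | j ≤ (k : ℕ) + 1}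

/-- Form (iii): `N(s) = {v_1, …, v_i} ∪ {v_j, …, v_r}` for some `1 ≤ i ≤ p`,
`q ≤ j ≤ r`. -/
def FormT {r : ℕ} (G : SimpleGraph V) (v : Fin r → V) (p q : ℕ) (s : V) : Prop :=
  ∃ i j, 1 ≤ i ∧ i ≤ p ∧ q ≤ j ∧ j ≤ r ∧
    G.neighborSet s = v '' {k : Fin r | (k : ℕ) < i} ∪ v '' {k : Fin r | j ≤ (k : ℕ) + 1}

/-- In a split graph with the split-comparability structure
and `Q` a maximal clique, if both `Q_l` and `Q_r` contain a maximum-degree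
vertex, then `Δ(G) = |Q| - 1 + |S_l| + |S_t| = |Q| - 1 + |S_r| + |S_t|`, hence
`|S_l| = |S_r|`. -/
theorem maxDeg_formula_of_delta_vertices_in_Ql_Qr
    [Fintype V] (G : SimpleGraph V) (Q S : Set V)
    (hsplit : IsSplitPartition G Q S)
    (r : ℕ) (v : Fin r → V) (hv : Function.Injective v) (hvQ : Set.range v = Q)
    (p q : ℕ) (hpr : p ≤ r) (hpq : p < q) (hqr : q ≤ r + 1)
    (hforms : ∀ s ∈ S, FormL G v p s ∨ FormR G v q s ∨ FormT G v p q s)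
    (Sl Sr St : Set V)
    (hSl : Sl = {s ∈ S | FormL G v p s})
    (hSr : Sr = {s ∈ S | FormR G v q s})
    (hSt : St = {s ∈ S | FormT G v p q s})
    (hNSl : (⋃ s ∈ Sl, G.neighborSet s).ncard = p)
    (hNSr : (⋃ s ∈ Sr, G.neighborSet s).ncard = r + 1 - q)
    (hQmax : ∀ Q' : Set V, G.IsClique Q' → Q ⊆ Q' → Q' = Q)
    (hl : ∃ a ∈ v '' {j : Fin r | (j : ℕ) < p}, deg G a = maxDeg G)
    (hr : ∃ b ∈ v '' {k : Fin r | q ≤ (k : ℕ) + 1}, deg G b = maxDeg G) :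
    maxDeg G = Q.ncard - 1 + Sl.ncard + St.ncard ∧
    maxDeg G = Q.ncard - 1 + Sr.ncard + St.ncard ∧
    Sl.ncard = Sr.ncard := by
  obtain ⟨hQS, hdisj, hclique, hstable⟩ := hsplit
  obtain ⟨a, haQl, hda⟩ := hl
  obtain ⟨ma, hma, rfl⟩ := haQl
  obtain ⟨b, hbQr, hdb⟩ := hr
  obtain ⟨mb, hmb, rfl⟩ := hbQr
  simp only [Set.mem_setOf_eq] at hma hmb
  have hr1 : 1 ≤ r := by have := ma.isLt; omega
  have hp1 : 1 ≤ p := by omega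
  have hq2 : 2 ≤ q := by omega
  have hqr' : q ≤ r := by have := mb.2; omega
  have hpr' : p ≤ r - 1 := by omega
  set z0 : Fin r := ⟨0, by omega⟩ with hz0
  set zr : Fin r := ⟨r - 1, by omega⟩ with hzr
  have hQr : Q.ncard = r := by
    rw [← hvQ, ← Set.image_univ, Set.ncard_image_of_injective _ hv, Set.ncard_univ,
      Nat.card_eq_fintype_card, Fintype.card_fin]
  -- neighborhood decomposition for clique vertices
  have hNu : ∀ u ∈ Q, G.neighborSet u = (Q \ {u}) ∪ {s | s ∈ S ∧ u ∈ G.neighborSet s} := by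
    intro u hu
    ext x
    simp only [SimpleGraph.mem_neighborSet, Set.mem_union, Set.mem_diff,
      Set.mem_singleton_iff, Set.mem_setOf_eq]
    constructor
    · intro hadj
      have hx : x ∈ Q ∪ S := by rw [hQS]; trivial
      rcases hx with h | h
      · exact Or.inl ⟨h, fun he => G.irrefl (he ▸ hadj)⟩
      · exact Or.inr ⟨h, hadj.symm⟩
    · rintro (⟨hxQ, hne⟩ | ⟨hxS, hadj⟩)
      · exact hclique hu hxQ (Ne.symm hne)
      · exact hadj.symm
  have hdeg : ∀ u ∈ Q, deg G u = r - 1 + {s | s ∈ S ∧ u ∈ G.neighborSet s}.ncard := by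
    intro u hu
    have hd : Disjoint (Q \ {u}) {s | s ∈ S ∧ u ∈ G.neighborSet s} :=
      hdisj.mono Set.diff_subset (fun s hs => hs.1)
    rw [deg, hNu u hu, Set.ncard_union_eq hd (Set.toFinite _) (Set.toFinite _),
      Set.ncard_diff_singleton_of_mem hu, hQr]
  have hmemQ : ∀ k : Fin r, v k ∈ Q := by
    intro k; rw [← hvQ]; exact ⟨k, rfl⟩
  -- characterization of S-neighbors of v z0
  have hleft : {s | s ∈ S ∧ v z0 ∈ G.neighborSet s} = Sl ∪ St := by
    ext s
    simp only [Set.mem_setOf_eq, Set.mem_union, hSl, hSt]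
    constructor
    · rintro ⟨hsS, hmem⟩
      rcases hforms s hsS with hL | hR | hT
      · exact Or.inl ⟨hsS, hL⟩
      · exfalso
        obtain ⟨j, hqj, hjr, hNs⟩ := hR
        rw [hNs, hv.mem_set_image, Set.mem_setOf_eq] at hmem
        simp only [hz0] at hmem
        omega
      · exact Or.inr ⟨hsS, hT⟩
    · rintro (⟨hsS, i, h1, h2, hNs⟩ | ⟨hsS, i, j, h1, h2, h3, h4, hNs⟩)
      · refine ⟨hsS, ?_⟩
        rw [hNs, hv.mem_set_image, Set.mem_setOf_eq]
        simp only [hz0]; omega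
      · refine ⟨hsS, ?_⟩
        rw [hNs]
        exact Set.mem_union_left _ (by rw [hv.mem_set_image, Set.mem_setOf_eq]; simp only [hz0]; omega)
  have hright : {s | s ∈ S ∧ v zr ∈ G.neighborSet s} = Sr ∪ St := by
    ext s
    simp only [Set.mem_setOf_eq, Set.mem_union, hSr, hSt]
    constructor
    · rintro ⟨hsS, hmem⟩
      rcases hforms s hsS with hL | hR | hT
      · exfalso
        obtain ⟨i, h1, h2, hNs⟩ := hL
        rw [hNs, hv.mem_set_image, Set.mem_setOf_eq] at hmem
        simp only [hzr] at hmem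
        omega
      · exact Or.inl ⟨hsS, hR⟩
      · exact Or.inr ⟨hsS, hT⟩
    · rintro (⟨hsS, j, h1, h2, hNs⟩ | ⟨hsS, i, j, h1, h2, h3, h4, hNs⟩)
      · refine ⟨hsS, ?_⟩
        rw [hNs, hv.mem_set_image, Set.mem_setOf_eq]
        simp only [hzr]; omega
      · refine ⟨hsS, ?_⟩
        rw [hNs]
        exact Set.mem_union_right _ (by rw [hv.mem_set_image, Set.mem_setOf_eq]; simp only [hzr]; omega)
  -- disjointness
  have hdisjLT : Disjoint Sl St := by
    rw [Set.disjoint_left]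
    intro s hsl hst
    rw [hSl] at hsl
    rw [hSt] at hst
    obtain ⟨hsS, i, h1, h2, hN1⟩ := hsl
    obtain ⟨-, i', j, g1, g2, g3, g4, hN2⟩ := hst
    have hm : v zr ∈ G.neighborSet s := by
      rw [hN2]
      exact Set.mem_union_right _ (by rw [hv.mem_set_image, Set.mem_setOf_eq]; simp only [hzr]; omega)
    rw [hN1, hv.mem_set_image, Set.mem_setOf_eq] at hm
    simp only [hzr] at hm
    omega
  have hdisjRT : Disjoint Sr St := by
    rw [Set.disjoint_left]
    intro s hsr hst
    rw [hSr] at hsr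
    rw [hSt] at hst
    obtain ⟨hsS, j, h1, h2, hN1⟩ := hsr
    obtain ⟨-, i', j', g1, g2, g3, g4, hN2⟩ := hst
    have hm : v z0 ∈ G.neighborSet s := by
      rw [hN2]
      exact Set.mem_union_left _ (by rw [hv.mem_set_image, Set.mem_setOf_eq]; simp only [hz0]; omega)
    rw [hN1, hv.mem_set_image, Set.mem_setOf_eq] at hm
    simp only [hz0] at hm
    omega
  -- degrees of the extreme vertices
  have hd0 : deg G (v z0) = r - 1 + (Sl.ncard + St.ncard) := by
    rw [hdeg (v z0) (hmemQ z0), hleft,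
      Set.ncard_union_eq hdisjLT (Set.toFinite _) (Set.toFinite _)]
  have hdr : deg G (v zr) = r - 1 + (Sr.ncard + St.ncard) := by
    rw [hdeg (v zr) (hmemQ zr), hright,
      Set.ncard_union_eq hdisjRT (Set.toFinite _) (Set.toFinite _)]
  -- bounds for the max-degree vertices
  have hsubL : {s | s ∈ S ∧ v ma ∈ G.neighborSet s} ⊆ Sl ∪ St := by
    rintro s ⟨hsS, hmem⟩
    rcases hforms s hsS with hL | hR | hT
    · exact Set.mem_union_left _ (by rw [hSl]; exact ⟨hsS, hL⟩)
    · exfalso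
      obtain ⟨j, h1, h2, hNs⟩ := hR
      rw [hNs, hv.mem_set_image, Set.mem_setOf_eq] at hmem
      omega
    · exact Set.mem_union_right _ (by rw [hSt]; exact ⟨hsS, hT⟩)
  have hsubR : {s | s ∈ S ∧ v mb ∈ G.neighborSet s} ⊆ Sr ∪ St := by
    rintro s ⟨hsS, hmem⟩
    rcases hforms s hsS with hL | hR | hT
    · exfalso
      obtain ⟨i, h1, h2, hNs⟩ := hL
      rw [hNs, hv.mem_set_image, Set.mem_setOf_eq] at hmem
      omega
    · exact Set.mem_union_left _ (by rw [hSr]; exact ⟨hsS, hR⟩)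
    · exact Set.mem_union_right _ (by rw [hSt]; exact ⟨hsS, hT⟩)
  have hbdd : BddAbove (Set.range (deg G)) := (Set.finite_range _).bddAbove
  have hle0 : deg G (v z0) ≤ maxDeg G := le_csSup hbdd ⟨v z0, rfl⟩
  have hler : deg G (v zr) ≤ maxDeg G := le_csSup hbdd ⟨v zr, rfl⟩
  have hboundL : maxDeg G ≤ r - 1 + (Sl.ncard + St.ncard) := by
    rw [← hda, hdeg (v ma) (hmemQ ma)]
    have := Set.ncard_le_ncard hsubL (Set.toFinite _)
    rw [Set.ncard_union_eq hdisjLT (Set.toFinite _) (Set.toFinite _)] at this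
    omega
  have hboundR : maxDeg G ≤ r - 1 + (Sr.ncard + St.ncard) := by
    rw [← hdb, hdeg (v mb) (hmemQ mb)]
    have := Set.ncard_le_ncard hsubR (Set.toFinite _)
    rw [Set.ncard_union_eq hdisjRT (Set.toFinite _) (Set.toFinite _)] at this
    omega
  rw [hd0] at hle0
  rw [hdr] at hler
  rw [hQr]
  omega
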